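/- Let h, h_1, h_2, h_3, h_{23}, h^x, h^x_1, h^y, h^z be complex numbers with h ≠ 0, h_1 ≠ 0 and h^x ≠ 0. Define M^{11} = h_1/h, M^{23} = −h^x/h, M^{31} = −h^y/h, M^{12} = −h^z/h, M^{32} = −(h_2h_3 + h·h_{23})/(h·h^x), and M^{23}_1 = −h^x_1/h_1. Then the hexahedron recurrence relation h^x_1·h^x·h = h^x·h^y·h^z + h_1·h_2·h_3 + h·h_1·h_{23} holds if and only if M^{23}_1 = M^{32} − M^{31}M^{12}/M^{11}. -/

import Mathlib

/-- The first hexahedron recurrence relation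
`h^x_1·h^x·h = h^xh^yh^z + h₁h₂h₃ + h·h₁·h₂₃` is equivalent to the M-system
equation `M^{23}_1 = M^{32} − M^{31}M^{12}/M^{11}` under the change of variables
`M^{11} = h₁/h`, `M^{23} = −h^x/h`, `M^{31} = −h^y/h`, `M^{12} = −h^z/h`,
`M^{32} = −(h₂h₃ + h·h₂₃)/(h·h^x)`, `M^{23}_1 = −h^x_1/h₁`. -/
theorem hexahedron_first_relation_iff_Msystem
    (h h1 h2 h3 h23 hx hx1 hy hz : ℂ)
    (hh : h ≠ 0) (hh1 : h1 ≠ 0) (hhx : hx ≠ 0) :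
    hx1 * hx * h = hx * hy * hz + h1 * h2 * h3 + h * h1 * h23 ↔
      -hx1 / h1 =
        -((h2 * h3 + h * h23) / (h * hx)) - (-hy / h) * (-hz / h) / (h1 / h) := by
  constructor
  · intro H; field_simp; linear_combination (-1 : ℂ) * H
  · intro H; field_simp at H
    have key : (-(h*h*h1)) * (hx1 * hx * h)
        = (-(h*h*h1)) * (hx * hy * hz + h1 * h2 * h3 + h * h1 * h23) := by
      linear_combination (h*h*h1) * H
    exact mul_left_cancel₀ (by simp [hh, hh1]) key
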